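/- In the node-activation model with gossip matrix W_1 = I − b L_1 for a real parameter b, the entrywise expectation of W_1² satisfies E[W_1²] = I − 2 b p² L_G + b² ( p³ (L_G² − 2 L_G) + 2 p² L_G ). -/

import Mathlib

open MeasureTheory ProbabilityTheory Matrix

noncomputable section

/-- The real-valued indicator of a Boolean. -/
def ind (b : Bool) : ℝ := if b then 1 else 0

/-- Adjacency matrix of the random induced subgraph: edge {i,j} of `G` is kept
iff both endpoints are active. -/
def A1 {N : ℕ} (G : SimpleGraph (Fin N)) [DecidableRel G.Adj] (X : Fin N → Bool) :
    Matrix (Fin N) (Fin N) ℝ :=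
  Matrix.of fun i j => (G.adjMatrix ℝ) i j * ind (X i) * ind (X j)

/-- Diagonal degree matrix of the random induced subgraph. -/
def D1 {N : ℕ} (G : SimpleGraph (Fin N)) [DecidableRel G.Adj] (X : Fin N → Bool) :
    Matrix (Fin N) (Fin N) ℝ :=
  Matrix.diagonal fun i => ∑ j, A1 G X i j

/-- Laplacian of the random induced subgraph. -/
def L1 {N : ℕ} (G : SimpleGraph (Fin N)) [DecidableRel G.Adj] (X : Fin N → Bool) :
    Matrix (Fin N) (Fin N) ℝ :=
  D1 G X - A1 G X

lemma ind_sq (x : Bool) : ind x * ind x = ind x := by cases x <;> simp [ind]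
lemma ind_nonneg (x : Bool) : 0 ≤ ind x := by cases x <;> simp [ind]
lemma ind_le_one (x : Bool) : ind x ≤ 1 := by cases x <;> simp [ind]
lemma ind_helper (x y z : Bool) : (ind y * ind x) * (ind x * ind z)
    = ind x * (ind y * ind z) := by cases x <;> simp [ind] <;> ring
lemma ind_helper2 (x y z : Bool) : (ind x * ind y) * (ind x * ind z)
    = ind x * (ind y * ind z) := by cases x <;> simp [ind] <;> ring

lemma matrix_expand {n : Type*} [Fintype n] [DecidableEq n] (b : ℝ) (L : Matrix n n ℝ) :
    (1 - b • L) * (1 - b • L) = 1 - (2*b) • L + (b^2) • (L*L) := by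
  have h2 : ∀ C : Matrix n n ℝ, (1 - C) * (1 - C) = 1 - C - C + C * C := fun C => by
    noncomm_ring
  rw [h2, Matrix.smul_mul, Matrix.mul_smul, smul_smul, sub_sub, ← two_smul ℝ (b • L),
    mul_smul, sq, smul_smul, smul_smul]

section aux
variable {N : ℕ} {Ω : Type*} [MeasurableSpace Ω] {μ : Measure Ω} [IsProbabilityMeasure μ]
  {p : ℝ} {X : Fin N → Ω → Bool}

lemma meas_e (hmeas : ∀ i, Measurable (X i)) (v : Fin N) :
    Measurable fun ω => ind (X v ω) :=
  (measurable_of_countable ind).comp (hmeas v)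

lemma int_bdd {f : Ω → ℝ} (hf : Measurable f) (h0 : ∀ ω, 0 ≤ f ω) (h1 : ∀ ω, f ω ≤ 1) :
    Integrable f μ :=
  (integrable_const (1:ℝ)).mono' hf.aestronglyMeasurable
    (Filter.Eventually.of_forall fun ω => by
      rw [Real.norm_eq_abs, abs_of_nonneg (h0 ω)]; exact h1 ω)

lemma int_prod (hmeas : ∀ i, Measurable (X i)) (S : Finset (Fin N)) :
    Integrable (fun ω => ∏ v ∈ S, ind (X v ω)) μ :=
  int_bdd (Finset.measurable_prod S fun v _ => meas_e hmeas v)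
    (fun ω => Finset.prod_nonneg fun v _ => ind_nonneg _)
    (fun ω => Finset.prod_le_one (fun v _ => ind_nonneg _) (fun v _ => ind_le_one _))

lemma exp_one (hp0 : 0 ≤ p) (hmeas : ∀ i, Measurable (X i))
    (hbern : ∀ i, μ {ω | X i ω = true} = ENNReal.ofReal p) (a : Fin N) :
    ∫ ω, ind (X a ω) ∂μ = p := by
  have hs : MeasurableSet {ω | X a ω = true} := (hmeas a) (measurableSet_singleton true)
  have h : (fun ω => ind (X a ω)) = Set.indicator {ω | X a ω = true} fun _ => (1:ℝ) := by
    funext ω; by_cases h : X a ω <;> simp [ind, h, Set.indicator_apply, Set.mem_setOf_eq]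
  rw [h, integral_indicator_const _ hs, Measure.real, hbern a]
  simp [ENNReal.toReal_ofReal hp0]

lemma exp_prod (hp0 : 0 ≤ p) (hmeas : ∀ i, Measurable (X i))
    (hindep : iIndepFun X μ)
    (hbern : ∀ i, μ {ω | X i ω = true} = ENNReal.ofReal p) (S : Finset (Fin N)) :
    ∫ ω, ∏ v ∈ S, ind (X v ω) ∂μ = p ^ S.card := by
  classical
  have hiind : iIndepFun
      (fun i => ind ∘ X i) μ := hindep.comp (fun _ => ind) (fun _ => measurable_of_countable ind)
  induction S using Finset.induction_on with
  | empty => simp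
  | insert _ _ ha ih =>
    rename_i a S
    have hident : IndepFun (∏ j ∈ S, (fun i => ind ∘ X i) j) ((fun i => ind ∘ X i) a) μ :=
      hiind.indepFun_finsetProd_of_notMem (fun v => meas_e hmeas v) ha
    have hprodeq : (∏ j ∈ S, (fun i => ind ∘ X i) j) = fun ω => ∏ v ∈ S, ind (X v ω) := by
      funext ω; simp
    rw [Finset.card_insert_of_notMem ha]
    have : ∫ ω, ∏ v ∈ insert a S, ind (X v ω) ∂μ
        = ∫ ω, (∏ v ∈ S, ind (X v ω)) * ind (X a ω) ∂μ := by
      congr 1; funext ω; rw [Finset.prod_insert ha]; ring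
    rw [this]
    have hint1 : Integrable (fun ω => ∏ v ∈ S, ind (X v ω)) μ := int_prod hmeas S
    have hint2 : Integrable (fun ω => ind (X a ω)) μ :=
      int_bdd (meas_e hmeas a) (fun ω => ind_nonneg _) (fun ω => ind_le_one _)
    have heq : ∫ ω, (∏ v ∈ S, ind (X v ω)) * ind (X a ω) ∂μ
        = integral μ ((fun ω => ∏ v ∈ S, ind (X v ω)) * fun ω => ind (X a ω)) := rfl
    rw [heq, IndepFun.integral_mul_eq_mul_integral (by rwa [hprodeq] at hident) hint1.aestronglyMeasurable
        hint2.aestronglyMeasurable,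
      ih, exp_one hp0 hmeas hbern a, pow_succ]


lemma exp_two (hp0 : 0 ≤ p) (hmeas : ∀ i, Measurable (X i))
    (hindep : iIndepFun X μ)
    (hbern : ∀ i, μ {ω | X i ω = true} = ENNReal.ofReal p)
    {u v : Fin N} (huv : u ≠ v) :
    ∫ ω, ind (X u ω) * ind (X v ω) ∂μ = p ^ 2 := by
  have h := exp_prod hp0 hmeas hindep hbern {u, v}
  rw [Finset.card_pair huv] at h
  rw [← h]
  congr 1; funext ω; rw [Finset.prod_pair huv]

lemma exp_three (hp0 : 0 ≤ p) (hmeas : ∀ i, Measurable (X i))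
    (hindep : iIndepFun X μ)
    (hbern : ∀ i, μ {ω | X i ω = true} = ENNReal.ofReal p)
    {c u v : Fin N} (hcu : c ≠ u) (hcv : c ≠ v) (huv : u ≠ v) :
    ∫ ω, ind (X c ω) * (ind (X u ω) * ind (X v ω)) ∂μ = p ^ 3 := by
  have h := exp_prod hp0 hmeas hindep hbern {c, u, v}
  have hcard : ({c, u, v} : Finset (Fin N)).card = 3 := by
    rw [Finset.card_insert_of_notMem (by simp [hcu, hcv]), Finset.card_pair huv]
  rw [hcard] at h
  rw [← h]
  congr 1; funext ω
  rw [Finset.prod_insert (by simp [hcu, hcv]), Finset.prod_pair huv]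

/-- Core: expectation of `ind c * (ind u * ind v)` with `c` distinct from `u,v`. -/
lemma key3 (hp0 : 0 ≤ p) (hmeas : ∀ i, Measurable (X i))
    (hindep : iIndepFun X μ)
    (hbern : ∀ i, μ {ω | X i ω = true} = ENNReal.ofReal p)
    {c u v : Fin N} (hcu : c ≠ u) (hcv : c ≠ v) :
    ∫ ω, ind (X c ω) * (ind (X u ω) * ind (X v ω)) ∂μ
      = if u = v then p ^ 2 else p ^ 3 := by
  by_cases huv : u = v
  · subst huv
    rw [if_pos rfl]
    have : (fun ω => ind (X c ω) * (ind (X u ω) * ind (X u ω)))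
        = fun ω => ind (X c ω) * ind (X u ω) := by
      funext ω; rw [ind_sq]
    rw [this, exp_two hp0 hmeas hindep hbern hcu]
  · rw [if_neg huv, exp_three hp0 hmeas hindep hbern hcu hcv huv]

end aux


theorem stmt8 {N : ℕ} (G : SimpleGraph (Fin N)) [DecidableRel G.Adj]
    {Ω : Type*} [MeasurableSpace Ω] (μ : Measure Ω) [IsProbabilityMeasure μ]
    (p : ℝ) (hp0 : 0 ≤ p) (hp1 : p ≤ 1) (b : ℝ)
    (X : Fin N → Ω → Bool)
    (hmeas : ∀ i, Measurable (X i))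
    (hindep : iIndepFun X μ)
    (hbern : ∀ i, μ {ω | X i ω = true} = ENNReal.ofReal p)
    (W1 : Ω → Matrix (Fin N) (Fin N) ℝ)
    (hW1 : ∀ ω, W1 ω = 1 - b • L1 G (fun v => X v ω)) :
    ∀ i j, ∫ ω, (W1 ω * W1 ω) i j ∂μ
      = ((1 : Matrix (Fin N) (Fin N) ℝ) - (2 * b * p ^ 2) • G.lapMatrix ℝ
          + b ^ 2 • (p ^ 3 • (G.lapMatrix ℝ * G.lapMatrix ℝ - 2 • G.lapMatrix ℝ)
            + (2 * p ^ 2) • G.lapMatrix ℝ)) i j := by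
  classical
  intro i j
  set A : Matrix (Fin N) (Fin N) ℝ := G.adjMatrix ℝ with hA
  -- basic adjacency facts
  have hsq : ∀ u v : Fin N, A u v * A u v = A u v := by
    intro u v; by_cases h : G.Adj u v <;> simp [hA, SimpleGraph.adjMatrix_apply, h]
  have hsymm : ∀ u v : Fin N, A u v = A v u := by
    intro u v
    by_cases h : G.Adj u v
    · simp [hA, SimpleGraph.adjMatrix_apply, h, h.symm]
    · have h' : ¬ G.Adj v u := fun hc => h hc.symm
      simp [hA, SimpleGraph.adjMatrix_apply, h, h']
  have hAzero : ∀ u v : Fin N, ¬ G.Adj u v → A u v = 0 := by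
    intro u v h; simp [hA, SimpleGraph.adjMatrix_apply, h]
  have hAii : A i i = 0 := hAzero i i (G.irrefl)
  -- canonical forms of the random matrices
  have hA1 : ∀ (ω : Ω) (u v : Fin N), A1 G (fun x => X x ω) u v
      = A u v * (ind (X u ω) * ind (X v ω)) := by
    intro ω u v; simp [A1, hA, mul_assoc]
  have hD1 : ∀ ω : Ω, D1 G (fun x => X x ω)
      = Matrix.diagonal (fun u => ∑ m, A u m * (ind (X u ω) * ind (X m ω))) := by
    intro ω
    have h : (fun u => ∑ m, A1 G (fun x => X x ω) u m)
        = fun u => ∑ m, A u m * (ind (X u ω) * ind (X m ω)) := by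
      funext u; exact Finset.sum_congr rfl fun m _ => hA1 ω u m
    rw [D1, h]
  -- guard lemmas for expectations
  have key2g : ∀ u v : Fin N, A u v * (∫ ω, ind (X u ω) * ind (X v ω) ∂μ)
      = A u v * p ^ 2 := by
    intro u v; by_cases h : G.Adj u v
    · rw [exp_two hp0 hmeas hindep hbern (G.ne_of_adj h)]
    · simp [hAzero u v h]
  have keyDDg : ∀ m n : Fin N,
      (A i m * A i n) *
        (∫ ω, (ind (X i ω) * ind (X m ω)) * (ind (X i ω) * ind (X n ω)) ∂μ)
      = (A i m * A i n) * (if m = n then p ^ 2 else p ^ 3) := by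
    intro m n
    by_cases hm : G.Adj i m
    swap
    · simp [hAzero i m hm]
    by_cases hn : G.Adj i n
    swap
    · simp [hAzero i n hn]
    simp only [ind_helper2]
    rw [key3 hp0 hmeas hindep hbern (G.ne_of_adj hm) (G.ne_of_adj hn)]
  have keyGg : ∀ u c v : Fin N,
      (A u c * A c v) *
        (∫ ω, (ind (X u ω) * ind (X c ω)) * (ind (X c ω) * ind (X v ω)) ∂μ)
      = (A u c * A c v) * (if u = v then p ^ 2 else p ^ 3) := by
    intro u c v
    by_cases hm : G.Adj u c
    swap
    · simp [hAzero u c hm]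
    by_cases hn : G.Adj c v
    swap
    · simp [hAzero c v hn]
    simp only [ind_helper]
    rw [key3 hp0 hmeas hindep hbern (Ne.symm (G.ne_of_adj hm)) (G.ne_of_adj hn)]
  -- entry formulas at (i,j)
  have hL1e : ∀ ω : Ω, L1 G (fun x => X x ω) i j
      = (if i = j then ∑ m, A i m * (ind (X i ω) * ind (X m ω)) else 0)
        - A i j * (ind (X i ω) * ind (X j ω)) := by
    intro ω
    rw [L1, Matrix.sub_apply, hD1 ω, Matrix.diagonal_apply, hA1 ω]
  have hDDe : ∀ ω : Ω, (D1 G (fun x => X x ω) * D1 G (fun x => X x ω)) i j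
      = if i = j then ∑ m, ∑ n, (A i m * A i n) *
          ((ind (X i ω) * ind (X m ω)) * (ind (X i ω) * ind (X n ω))) else 0 := by
    intro ω
    rw [hD1 ω, Matrix.diagonal_mul_diagonal, Matrix.diagonal_apply]
    by_cases hij : i = j
    · rw [if_pos hij, if_pos hij, Finset.sum_mul_sum]
      exact Finset.sum_congr rfl fun m _ => Finset.sum_congr rfl fun n _ => by ring
    · rw [if_neg hij, if_neg hij]
  have hDAe : ∀ ω : Ω, (D1 G (fun x => X x ω) * A1 G (fun x => X x ω)) i j
      = ∑ m, (A i m * A i j) *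
          ((ind (X i ω) * ind (X m ω)) * (ind (X i ω) * ind (X j ω))) := by
    intro ω
    rw [hD1 ω, Matrix.diagonal_mul, hA1 ω, Finset.sum_mul]
    exact Finset.sum_congr rfl fun m _ => by ring
  have hADe : ∀ ω : Ω, (A1 G (fun x => X x ω) * D1 G (fun x => X x ω)) i j
      = ∑ n, (A i j * A j n) *
          ((ind (X i ω) * ind (X j ω)) * (ind (X j ω) * ind (X n ω))) := by
    intro ω
    rw [hD1 ω, Matrix.mul_diagonal, hA1 ω, Finset.mul_sum]
    exact Finset.sum_congr rfl fun n _ => by ring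
  have hAAe : ∀ ω : Ω, (A1 G (fun x => X x ω) * A1 G (fun x => X x ω)) i j
      = ∑ k, (A i k * A k j) *
          ((ind (X i ω) * ind (X k ω)) * (ind (X k ω) * ind (X j ω))) := by
    intro ω
    rw [Matrix.mul_apply]
    exact Finset.sum_congr rfl fun k _ => by rw [hA1 ω, hA1 ω]; ring
  -- integrability
  have int2 : ∀ u v : Fin N, Integrable (fun ω => ind (X u ω) * ind (X v ω)) μ := by
    intro u v
    exact int_bdd ((meas_e hmeas u).mul (meas_e hmeas v))
      (fun ω => mul_nonneg (ind_nonneg _) (ind_nonneg _))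
      (fun ω => mul_le_one₀ (ind_le_one _) (ind_nonneg _) (ind_le_one _))
  have int4 : ∀ t u v w : Fin N,
      Integrable (fun ω => (ind (X t ω) * ind (X u ω)) * (ind (X v ω) * ind (X w ω))) μ := by
    intro t u v w
    exact int_bdd (((meas_e hmeas t).mul (meas_e hmeas u)).mul
        ((meas_e hmeas v).mul (meas_e hmeas w)))
      (fun ω => mul_nonneg (mul_nonneg (ind_nonneg _) (ind_nonneg _))
        (mul_nonneg (ind_nonneg _) (ind_nonneg _)))
      (fun ω => mul_le_one₀
        (mul_le_one₀ (ind_le_one _) (ind_nonneg _) (ind_le_one _))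
        (mul_nonneg (ind_nonneg _) (ind_nonneg _))
        (mul_le_one₀ (ind_le_one _) (ind_nonneg _) (ind_le_one _)))
  have IntL1 : Integrable (fun ω => L1 G (fun x => X x ω) i j) μ := by
    simp only [hL1e]
    apply Integrable.sub
    · by_cases hij : i = j
      · simp only [if_pos hij]
        exact integrable_finset_sum _ fun m _ => (int2 i m).const_mul _
      · simp only [if_neg hij]
        exact integrable_const 0
    · exact (int2 i j).const_mul _
  have IntDD : Integrable (fun ω => (D1 G (fun x => X x ω) * D1 G (fun x => X x ω)) i j) μ := by
    simp only [hDDe]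
    by_cases hij : i = j
    · simp only [if_pos hij]
      exact integrable_finset_sum _ fun m _ =>
        integrable_finset_sum _ fun n _ => (int4 i m i n).const_mul _
    · simp only [if_neg hij]
      exact integrable_const 0
  have IntDA : Integrable (fun ω => (D1 G (fun x => X x ω) * A1 G (fun x => X x ω)) i j) μ := by
    simp only [hDAe]
    exact integrable_finset_sum _ fun m _ => (int4 i m i j).const_mul _
  have IntAD : Integrable (fun ω => (A1 G (fun x => X x ω) * D1 G (fun x => X x ω)) i j) μ := by
    simp only [hADe]
    exact integrable_finset_sum _ fun n _ => (int4 i j j n).const_mul _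
  have IntAA : Integrable (fun ω => (A1 G (fun x => X x ω) * A1 G (fun x => X x ω)) i j) μ := by
    simp only [hAAe]
    exact integrable_finset_sum _ fun k _ => (int4 i k k j).const_mul _
  -- values of the integrals
  have valL1 : ∫ ω, L1 G (fun x => X x ω) i j ∂μ
      = (if i = j then (∑ m, A i m) * p ^ 2 else 0) - A i j * p ^ 2 := by
    simp only [hL1e]
    rw [integral_sub (by
        by_cases hij : i = j
        · simp only [if_pos hij]
          exact integrable_finset_sum _ fun m _ => (int2 i m).const_mul _
        · simp only [if_neg hij]; exact integrable_const 0)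
      ((int2 i j).const_mul _)]
    congr 1
    · by_cases hij : i = j
      · simp only [if_pos hij]
        rw [integral_finset_sum _ fun m _ => (int2 i m).const_mul _, Finset.sum_mul]
        exact Finset.sum_congr rfl fun m _ => by
          rw [integral_const_mul]; exact key2g i m
      · simp only [if_neg hij, integral_zero]
    · rw [integral_const_mul]; exact key2g i j
  have valDD : ∫ ω, (D1 G (fun x => X x ω) * D1 G (fun x => X x ω)) i j ∂μ
      = if i = j then p ^ 3 * ((∑ m, A i m) * (∑ m, A i m)) + (p ^ 2 - p ^ 3) * (∑ m, A i m)
        else 0 := by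
    simp only [hDDe]
    by_cases hij : i = j
    · simp only [if_pos hij]
      rw [integral_finset_sum _ fun m _ =>
        integrable_finset_sum _ fun n _ => (int4 i m i n).const_mul _]
      have h1 : ∀ m : Fin N,
          (∫ ω, ∑ n, (A i m * A i n) *
            ((ind (X i ω) * ind (X m ω)) * (ind (X i ω) * ind (X n ω))) ∂μ)
          = p ^ 3 * (A i m * (∑ n, A i n)) + (p ^ 2 - p ^ 3) * A i m := by
        intro m
        rw [integral_finset_sum _ fun n _ => (int4 i m i n).const_mul _]
        have h2 : ∀ n : Fin N,
            (∫ ω, (A i m * A i n) *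
              ((ind (X i ω) * ind (X m ω)) * (ind (X i ω) * ind (X n ω))) ∂μ)
            = p ^ 3 * (A i m * A i n) + (if m = n then (p ^ 2 - p ^ 3) * A i m else 0) := by
          intro n
          rw [integral_const_mul]
          rw [keyDDg m n]
          by_cases hmn : m = n
          · subst hmn; rw [if_pos rfl, if_pos rfl, hsq i m]; ring
          · rw [if_neg hmn, if_neg hmn]; ring
        rw [Finset.sum_congr rfl fun n _ => h2 n, Finset.sum_add_distrib,
          ← Finset.mul_sum, ← Finset.mul_sum, Finset.sum_ite_eq]
        simp
      rw [Finset.sum_congr rfl fun m _ => h1 m, Finset.sum_add_distrib,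
        ← Finset.mul_sum, ← Finset.sum_mul, ← Finset.mul_sum]
    · simp only [if_neg hij, integral_zero]
  have valDA : ∫ ω, (D1 G (fun x => X x ω) * A1 G (fun x => X x ω)) i j ∂μ
      = p ^ 3 * ((∑ m, A i m) * A i j) + (p ^ 2 - p ^ 3) * A i j := by
    simp only [hDAe]
    rw [integral_finset_sum _ fun m _ => (int4 i m i j).const_mul _]
    have h2 : ∀ m : Fin N,
        (∫ ω, (A i m * A i j) *
          ((ind (X i ω) * ind (X m ω)) * (ind (X i ω) * ind (X j ω))) ∂μ)
        = p ^ 3 * (A i m * A i j) + (if m = j then (p ^ 2 - p ^ 3) * A i j else 0) := by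
      intro m
      rw [integral_const_mul, keyDDg m j]
      by_cases hmj : m = j
      · subst hmj; rw [if_pos rfl, if_pos rfl, hsq i m]; ring
      · rw [if_neg hmj, if_neg hmj]; ring
    rw [Finset.sum_congr rfl fun m _ => h2 m, Finset.sum_add_distrib,
      ← Finset.mul_sum, ← Finset.sum_mul, Finset.sum_ite_eq']
    simp
  have valAD : ∫ ω, (A1 G (fun x => X x ω) * D1 G (fun x => X x ω)) i j ∂μ
      = p ^ 3 * (A i j * (∑ n, A j n)) + (p ^ 2 - p ^ 3) * A i j := by
    simp only [hADe]
    rw [integral_finset_sum _ fun n _ => (int4 i j j n).const_mul _]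
    have h2 : ∀ n : Fin N,
        (∫ ω, (A i j * A j n) *
          ((ind (X i ω) * ind (X j ω)) * (ind (X j ω) * ind (X n ω))) ∂μ)
        = p ^ 3 * (A i j * A j n) + (if i = n then (p ^ 2 - p ^ 3) * A i j else 0) := by
      intro n
      rw [integral_const_mul, keyGg i j n]
      by_cases hin : i = n
      · subst hin; rw [if_pos rfl, if_pos rfl, ← hsymm i j, hsq i j]; ring
      · rw [if_neg hin, if_neg hin]; ring
    rw [Finset.sum_congr rfl fun n _ => h2 n, Finset.sum_add_distrib,
      ← Finset.mul_sum, ← Finset.mul_sum, Finset.sum_ite_eq]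
    simp
  have valAA : ∫ ω, (A1 G (fun x => X x ω) * A1 G (fun x => X x ω)) i j ∂μ
      = (∑ k, A i k * A k j) * (if i = j then p ^ 2 else p ^ 3) := by
    simp only [hAAe]
    rw [integral_finset_sum _ fun k _ => (int4 i k k j).const_mul _, Finset.sum_mul]
    exact Finset.sum_congr rfl fun k _ => by
      rw [integral_const_mul]; exact keyGg i k j
  -- pointwise expansion of the square
  have hsplit : ∀ ω : Ω, L1 G (fun x => X x ω) * L1 G (fun x => X x ω)
      = D1 G (fun x => X x ω) * D1 G (fun x => X x ω)
        - D1 G (fun x => X x ω) * A1 G (fun x => X x ω)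
        - A1 G (fun x => X x ω) * D1 G (fun x => X x ω)
        + A1 G (fun x => X x ω) * A1 G (fun x => X x ω) := by
    intro ω; rw [L1]; noncomm_ring
  have haveW : ∀ ω, (W1 ω * W1 ω) i j
      = (1 : Matrix (Fin N) (Fin N) ℝ) i j
        - (2*b) * L1 G (fun v => X v ω) i j
        + b^2 * ((D1 G (fun x => X x ω) * D1 G (fun x => X x ω)) i j
          - (D1 G (fun x => X x ω) * A1 G (fun x => X x ω)) i j
          - (A1 G (fun x => X x ω) * D1 G (fun x => X x ω)) i j
          + (A1 G (fun x => X x ω) * A1 G (fun x => X x ω)) i j) := by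
    intro ω
    rw [hW1 ω, matrix_expand, hsplit ω]
    simp [Matrix.add_apply, Matrix.sub_apply, Matrix.smul_apply, smul_eq_mul,
      mul_sub, mul_add]
  -- put the integral together
  rw [show (fun ω => (W1 ω * W1 ω) i j) = fun ω =>
      (1 : Matrix (Fin N) (Fin N) ℝ) i j
        - (2*b) * L1 G (fun v => X v ω) i j
        + b^2 * ((D1 G (fun x => X x ω) * D1 G (fun x => X x ω)) i j
          - (D1 G (fun x => X x ω) * A1 G (fun x => X x ω)) i j
          - (A1 G (fun x => X x ω) * D1 G (fun x => X x ω)) i j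
          + (A1 G (fun x => X x ω) * A1 G (fun x => X x ω)) i j) from funext haveW]
  have ha1 : Integrable (fun ω => (1 : Matrix (Fin N) (Fin N) ℝ) i j
      - (2*b) * L1 G (fun v => X v ω) i j) μ :=
    (integrable_const _).sub (IntL1.const_mul _)
  have ha2 : Integrable (fun ω => (D1 G (fun x => X x ω) * D1 G (fun x => X x ω)) i j
      - (D1 G (fun x => X x ω) * A1 G (fun x => X x ω)) i j) μ := IntDD.sub IntDA
  have ha3 : Integrable (fun ω => (D1 G (fun x => X x ω) * D1 G (fun x => X x ω)) i j
      - (D1 G (fun x => X x ω) * A1 G (fun x => X x ω)) i j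
      - (A1 G (fun x => X x ω) * D1 G (fun x => X x ω)) i j) μ := ha2.sub IntAD
  have ha4 : Integrable (fun ω => (D1 G (fun x => X x ω) * D1 G (fun x => X x ω)) i j
      - (D1 G (fun x => X x ω) * A1 G (fun x => X x ω)) i j
      - (A1 G (fun x => X x ω) * D1 G (fun x => X x ω)) i j
      + (A1 G (fun x => X x ω) * A1 G (fun x => X x ω)) i j) μ := ha3.add IntAA
  have ha5 : Integrable (fun ω => b^2 * ((D1 G (fun x => X x ω) * D1 G (fun x => X x ω)) i j
      - (D1 G (fun x => X x ω) * A1 G (fun x => X x ω)) i j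
      - (A1 G (fun x => X x ω) * D1 G (fun x => X x ω)) i j
      + (A1 G (fun x => X x ω) * A1 G (fun x => X x ω)) i j)) μ := ha4.const_mul _
  rw [integral_add ha1 ha5,
    integral_sub (integrable_const _) (IntL1.const_mul _),
    integral_const, integral_const_mul, integral_const_mul,
    integral_add ha3 IntAA,
    integral_sub ha2 IntAD,
    integral_sub IntDD IntDA,
    valL1, valDD, valDA, valAD, valAA]
  simp only [Measure.real, measure_univ, ENNReal.toReal_one, one_smul]
  -- Laplacian entries
  have hdeg : ∀ u : Fin N, (G.degree u : ℝ) = ∑ m, A u m := by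
    intro u
    simp [hA, SimpleGraph.adjMatrix_apply, SimpleGraph.degree,
      SimpleGraph.neighborFinset_eq_filter, Finset.sum_boole]
  have hLap : ∀ u v : Fin N, G.lapMatrix ℝ u v = (if u = v then ∑ m, A u m else 0) - A u v := by
    intro u v
    by_cases huv : u = v <;>
      simp [SimpleGraph.lapMatrix, SimpleGraph.degMatrix, Matrix.sub_apply,
        Matrix.diagonal_apply, huv, hdeg, hA]
  have h2L : (2 : ℕ) • G.lapMatrix ℝ = (2 : ℝ) • G.lapMatrix ℝ := by
    rw [← Nat.cast_smul_eq_nsmul ℝ 2 (G.lapMatrix ℝ)]; norm_num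
  rw [h2L]
  simp only [Matrix.add_apply, Matrix.sub_apply, Matrix.smul_apply, smul_eq_mul,
    Matrix.mul_apply, hLap, Matrix.one_apply]
  by_cases hij : i = j
  · subst hij
    have hS : ∑ k, A i k * A k i = ∑ k, A i k :=
      Finset.sum_congr rfl fun k _ => by rw [← hsymm i k, hsq i k]
    have hcol : ∑ k, ((if i = k then ∑ m, A i m else 0) - A i k)
        * ((if k = i then ∑ m, A k m else 0) - A k i)
        = (∑ m, A i m) * (∑ m, A i m) + ∑ k, A i k * A k i := by
      have hterm : ∀ k : Fin N, ((if i = k then ∑ m, A i m else 0) - A i k)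
          * ((if k = i then ∑ m, A k m else 0) - A k i)
          = (if i = k then (∑ m, A i m) * (∑ m, A k m)
              - (∑ m, A i m) * A k i - A i k * (∑ m, A k m) else 0)
            + A i k * A k i := by
        intro k
        by_cases hik : i = k
        · subst hik; simp [hAii]
        · have hki : ¬ k = i := fun hc => hik hc.symm
          rw [if_neg hik, if_neg hki, if_neg hik]; ring
      rw [Finset.sum_congr rfl fun k _ => hterm k, Finset.sum_add_distrib,
        Finset.sum_ite_eq]
      simp [hAii]
    simp only [hcol, hS, hAii]
    simp
    ring
  · have hji : ¬ j = i := fun hc => hij hc.symm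
    have hcol : ∑ k, ((if i = k then ∑ m, A i m else 0) - A i k)
        * ((if k = j then ∑ m, A k m else 0) - A k j)
        = - ((∑ m, A i m) * A i j) - A i j * (∑ m, A j m) + ∑ k, A i k * A k j := by
      have hterm : ∀ k : Fin N, ((if i = k then ∑ m, A i m else 0) - A i k)
          * ((if k = j then ∑ m, A k m else 0) - A k j)
          = (if i = k then - ((∑ m, A i m) * A k j) else 0)
            + (if k = j then - (A i k * (∑ m, A k m)) else 0)
            + A i k * A k j := by
        intro k
        by_cases hik : i = k
        · subst hik; simp [hij]; try ring
        · by_cases hkj : k = j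
          · subst hkj; simp [hik]; try ring
          · simp [hik, hkj]; try ring
      rw [Finset.sum_congr rfl fun k _ => hterm k, Finset.sum_add_distrib,
        Finset.sum_add_distrib, Finset.sum_ite_eq, Finset.sum_ite_eq']
      simp
      try ring
    simp only [hcol, if_neg hij]
    ring

end
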